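/- Every tropical hemispace H ⊆ ℝmaxⁿ is a tropical polyhedron with mixed constraints, i.e., it is the solution set of finitely many mixed tropical affine inequalities. -/

import Mathlib

attribute [local instance] Classical.propDecidable

/-- The germ semiring `𝔾 = ℝmax ∪ {+∞} ∪ ℝ⁻`: `negInf` is `-∞`, `fin a` is the
real number `a` (an element of `ℝmax`), `germ a` is the germ `a̲ ∈ ℝ⁻`, and
`posInf` is `+∞`. -/
inductive TGerm where
  | negInf : TGerm
  | fin : ℝ → TGerm
  | germ : ℝ → TGerm
  | posInf : TGerm

namespace TGerm

/-- The modulus `|x| ∈ ℝmax ∪ {+∞} = EReal` of an element of `𝔾`. -/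
noncomputable def modulus : TGerm → EReal
  | negInf => ⊥
  | fin a => (a : EReal)
  | germ a => (a : EReal)
  | posInf => ⊤

/-- Whether `x` belongs to the copy `ℝ⁻` of perturbed reals. -/
def isPert : TGerm → Bool
  | germ _ => true
  | _ => false

/-- The total order `≤𝔾` on `𝔾`: `x ≤𝔾 y` iff `|x| < |y|` when
`x ∈ ℝmax ∪ {+∞}` and `y ∈ ℝ⁻`, and `|x| ≤ |y|` otherwise. -/
def gle (x y : TGerm) : Prop :=
  if isPert x = false ∧ isPert y = true then modulus x < modulus y
  else modulus x ≤ modulus y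

/-- The valuation `x(ε) ∈ ℝmax ∪ {+∞} = EReal` of `x ∈ 𝔾` at `ε`. -/
noncomputable def val : TGerm → ℝ → EReal
  | negInf, _ => ⊥
  | fin a, _ => (a : EReal)
  | germ a, ε => ((a - ε : ℝ) : EReal)
  | posInf, _ => ⊤

/-- The addition `⊕` of `𝔾`: the maximum with respect to `≤𝔾`. -/
noncomputable def add (x y : TGerm) : TGerm := if gle x y then y else x

/-- The minimum with respect to `≤𝔾`. -/
noncomputable def gmin (x y : TGerm) : TGerm := if gle x y then x else y

/-- The tropical sum `⊕ᵢ f i` of a finite family in `𝔾`. -/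
noncomputable def gsum {n : ℕ} (f : Fin n → TGerm) : TGerm :=
  (List.ofFn f).foldr add negInf

/-- The minimum (w.r.t. `≤𝔾`) of a finite family in `𝔾`. -/
noncomputable def ginf {n : ℕ} (f : Fin n → TGerm) : TGerm :=
  (List.ofFn f).foldr gmin posInf

/-- The multiplication `⊗` of `𝔾`. -/
def mul : TGerm → TGerm → TGerm
  | negInf, _ => negInf
  | _, negInf => negInf
  | posInf, _ => posInf
  | _, posInf => posInf
  | fin a, fin b => fin (a + b)
  | fin a, germ b => germ (a + b)
  | germ a, fin b => germ (a + b)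
  | germ a, germ b => germ (a + b)

end TGerm

/-- The embedding of `ℝmax = ℝ ∪ {-∞}` into the germ semiring `𝔾`. -/
def toGerm (x : WithBot ℝ) : TGerm := WithBot.recBotCoe TGerm.negInf TGerm.fin x

/-- The embedding of `ℝmax = ℝ ∪ {-∞}` into `ℝmax ∪ {+∞} = EReal`. -/
noncomputable def rmaxToEReal (x : WithBot ℝ) : EReal :=
  WithBot.recBotCoe ⊥ (fun a : ℝ => (a : EReal)) x

/-- A subset of `ℝmaxⁿ` is tropically convex. -/
def TropConvex {n : ℕ} (C : Set (Fin n → WithBot ℝ)) : Prop :=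
  ∀ u ∈ C, ∀ v ∈ C, ∀ lam mu : WithBot ℝ, max lam mu = 0 →
    (fun i => max (lam + u i) (mu + v i)) ∈ C

/-- A subset of `ℝmaxⁿ` is a tropical polyhedron with mixed constraints: it is
the solution set of finitely many mixed tropical affine inequalities
`a₀ ⊕ a₁x₁ ⊕ ⋯ ⊕ aₙxₙ ≤𝔾 b₀ ⊕ b₁x₁ ⊕ ⋯ ⊕ bₙxₙ` with `aᵢ ∈ ℝmax`, `bᵢ ∈ 𝔾`. -/
def IsMixedPoly {n : ℕ} (P : Set (Fin n → WithBot ℝ)) : Prop :=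
  ∃ (p : ℕ) (a₀ : Fin p → WithBot ℝ) (a : Fin p → Fin n → WithBot ℝ)
    (b₀ : Fin p → TGerm) (b : Fin p → Fin n → TGerm),
    P = { x | ∀ k,
      (TGerm.add (toGerm (a₀ k))
          (TGerm.gsum fun i => (toGerm (a k i)).mul (toGerm (x i)))).gle
        (TGerm.add (b₀ k) (TGerm.gsum fun i => (b k i).mul (toGerm (x i)))) }

namespace HemiAux

open TGerm

local notation "ℝm" => WithBot ℝ

/-! ### rmaxToEReal lemmas -/

@[simp] lemma rV_bot : rmaxToEReal (⊥ : ℝm) = ⊥ := rfl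
@[simp] lemma rV_coe (a : ℝ) : rmaxToEReal (a : ℝm) = (a : EReal) := rfl

lemma rV_ne_top (x : ℝm) : rmaxToEReal x ≠ ⊤ := by
  cases x using WithBot.recBotCoe <;> simp

lemma rV_le_iff {x y : ℝm} : rmaxToEReal x ≤ rmaxToEReal y ↔ x ≤ y := by
  cases x using WithBot.recBotCoe <;> cases y using WithBot.recBotCoe <;>
    simp [EReal.coe_le_coe_iff, WithBot.coe_le_coe]

lemma rV_lt_iff {x y : ℝm} : rmaxToEReal x < rmaxToEReal y ↔ x < y := by
  rw [← not_le, ← not_le, rV_le_iff]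

@[simp] lemma rV_eq_bot_iff {x : ℝm} : rmaxToEReal x = ⊥ ↔ x = ⊥ := by
  cases x using WithBot.recBotCoe <;> simp

lemma rV_max (x y : ℝm) : rmaxToEReal (max x y) = max (rmaxToEReal x) (rmaxToEReal y) := by
  rcases le_total x y with h | h
  · rw [max_eq_right h, max_eq_right (rV_le_iff.2 h)]
  · rw [max_eq_left h, max_eq_left (rV_le_iff.2 h)]

lemma rV_add (x y : ℝm) : rmaxToEReal (x + y) = rmaxToEReal x + rmaxToEReal y := by
  cases x using WithBot.recBotCoe <;> cases y using WithBot.recBotCoe <;>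
    simp [← EReal.coe_add, ← WithBot.coe_add]

/-- truncation of `EReal` back to `ℝmax`, sending `⊤` to (junk) `⊥`. -/
noncomputable def toRm (e : EReal) : ℝm :=
  if h : e = ⊤ then ⊥ else if h2 : e = ⊥ then ⊥ else (e.toReal : ℝm)

lemma rV_toRm {e : EReal} (h : e ≠ ⊤) : rmaxToEReal (toRm e) = e := by
  unfold toRm
  rcases eq_or_ne e ⊥ with rfl | hb
  · simp
  · rw [dif_neg h, dif_neg hb, rV_coe, EReal.coe_toReal h hb]

/-! ### gle basic lemmas -/

lemma gle_iff (x y : TGerm) :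
    gle x y ↔ modulus x < modulus y ∨
      (modulus x = modulus y ∧ ¬(isPert x = false ∧ isPert y = true)) := by
  unfold gle
  by_cases h : isPert x = false ∧ isPert y = true
  · rw [if_pos h]
    constructor
    · exact fun h' => Or.inl h'
    · rintro (h' | ⟨-, h2⟩)
      · exact h'
      · exact absurd h h2
  · rw [if_neg h]
    constructor
    · intro h'
      rcases lt_or_eq_of_le h' with h'' | h''
      · exact Or.inl h''
      · exact Or.inr ⟨h'', h⟩
    · rintro (h' | ⟨h', -⟩)
      · exact le_of_lt h'
      · exact le_of_eq h'

lemma gle_trans {x y z : TGerm} (h1 : gle x y) (h2 : gle y z) : gle x z := by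
  rw [gle_iff] at h1 h2 ⊢
  rcases h1 with h1 | ⟨e1, p1⟩
  · rcases h2 with h2 | ⟨e2, -⟩
    · exact Or.inl (h1.trans h2)
    · exact Or.inl (e2 ▸ h1)
  · rcases h2 with h2 | ⟨e2, p2⟩
    · exact Or.inl (e1 ▸ h2)
    · refine Or.inr ⟨e1.trans e2, ?_⟩
      rintro ⟨px, pz⟩
      rcases Bool.eq_false_or_eq_true (isPert y) with hy | hy
      · exact p1 ⟨px, hy⟩
      · exact p2 ⟨hy, pz⟩

lemma gle_total (x y : TGerm) : gle x y ∨ gle y x := by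
  rw [gle_iff, gle_iff]
  rcases lt_trichotomy (modulus x) (modulus y) with h | h | h
  · exact Or.inl (Or.inl h)
  · by_cases hp : isPert x = false ∧ isPert y = true
    · refine Or.inr (Or.inr ⟨h.symm, ?_⟩)
      rintro ⟨hy, hx⟩
      rw [hp.1] at hx; exact absurd hx (by simp)
    · exact Or.inl (Or.inr ⟨h, hp⟩)
  · exact Or.inr (Or.inl h)

lemma gle_add_iff {L X Y : TGerm} : gle L (add X Y) ↔ gle L X ∨ gle L Y := by
  unfold add
  by_cases h : gle X Y
  · rw [if_pos h]
    exact ⟨fun h' => Or.inr h', fun h' => h'.elim (fun hx => gle_trans hx h) id⟩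
  · rw [if_neg h]
    rcases gle_total X Y with h' | h'
    · exact absurd h' h
    · exact ⟨fun h'' => Or.inl h'', fun h'' => h''.elim id (fun hy => gle_trans hy h')⟩

@[simp] lemma toGerm_bot : toGerm (⊥ : ℝm) = negInf := rfl
@[simp] lemma toGerm_coe (a : ℝ) : toGerm (a : ℝm) = fin a := rfl

@[simp] lemma isPert_toGerm (x : ℝm) : isPert (toGerm x) = false := by
  cases x using WithBot.recBotCoe <;> rfl

lemma modulus_toGerm (x : ℝm) : modulus (toGerm x) = rmaxToEReal x := by
  cases x using WithBot.recBotCoe <;> rfl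

lemma gle_toGerm_negInf_iff {L : ℝm} : gle (toGerm L) negInf ↔ L = ⊥ := by
  rw [gle_iff]
  cases L using WithBot.recBotCoe with
  | bot => simp [modulus, modulus_toGerm]
  | coe a =>
      simp only [modulus_toGerm, rV_coe, modulus]
      constructor
      · rintro (h | ⟨h, -⟩)
        · exact absurd h (by simp)
        · exact absurd h (by simp)
      · intro h; exact absurd h (by simp)

lemma gle_gsum_iff {L : ℝm} {m : ℕ} (f : Fin m → TGerm) :
    gle (toGerm L) (gsum f) ↔ L = ⊥ ∨ ∃ i, gle (toGerm L) (f i) := by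
  unfold gsum
  have key : ∀ l : List TGerm, gle (toGerm L) (l.foldr add negInf) ↔
      L = ⊥ ∨ ∃ g ∈ l, gle (toGerm L) g := by
    intro l
    induction l with
    | nil => simpa using gle_toGerm_negInf_iff
    | cons a l ih =>
        simp only [List.foldr_cons, gle_add_iff, ih, List.mem_cons]
        constructor
        · rintro (h | h | ⟨g, hg, h⟩)
          · exact Or.inr ⟨a, Or.inl rfl, h⟩
          · exact Or.inl h
          · exact Or.inr ⟨g, Or.inr hg, h⟩
        · rintro (h | ⟨g, (rfl | hg), h⟩)
          · exact Or.inr (Or.inl h)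
          · exact Or.inl h
          · exact Or.inr (Or.inr ⟨g, hg, h⟩)
  rw [key]
  simp only [List.mem_ofFn]
  constructor
  · rintro (h | ⟨g, ⟨i, rfl⟩, h⟩)
    · exact Or.inl h
    · exact Or.inr ⟨i, h⟩
  · rintro (h | ⟨i, h⟩)
    · exact Or.inl h
    · exact Or.inr ⟨f i, ⟨i, rfl⟩, h⟩

end HemiAux
namespace HemiAux

open TGerm

local notation "ℝm" => WithBot ℝ

lemma gle_toGerm_fin_iff {L : ℝm} {b : ℝ} :
    gle (toGerm L) (fin b) ↔ rmaxToEReal L ≤ (b : EReal) := by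
  rw [gle_iff]
  have hp : isPert (fin b) = false := rfl
  have hm : modulus (fin b) = (b : EReal) := rfl
  rw [hm, modulus_toGerm]
  constructor
  · rintro (h | ⟨h, -⟩)
    · exact le_of_lt h
    · exact le_of_eq h
  · intro h
    rcases lt_or_eq_of_le h with h' | h'
    · exact Or.inl h'
    · exact Or.inr ⟨h', by rw [hp]; rintro ⟨-, h2⟩; exact absurd h2 (by simp)⟩

lemma gle_toGerm_germ_iff {L : ℝm} {b : ℝ} :
    gle (toGerm L) (germ b) ↔ rmaxToEReal L < (b : EReal) := by
  rw [gle_iff]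
  have hm : modulus (germ b) = (b : EReal) := rfl
  rw [hm, modulus_toGerm]
  constructor
  · rintro (h | ⟨-, h⟩)
    · exact h
    · exact absurd ⟨isPert_toGerm L, rfl⟩ h
  · exact fun h => Or.inl h

lemma gle_toGerm_posInf {L : ℝm} : gle (toGerm L) posInf := by
  rw [gle_iff, modulus_toGerm]
  have hm : modulus posInf = (⊤ : EReal) := rfl
  rw [hm]
  rcases lt_or_eq_of_le (le_top : rmaxToEReal L ≤ ⊤) with h | h
  · exact Or.inl h
  · exact Or.inr ⟨h, by rintro ⟨-, h2⟩; exact absurd h2 (by simp [isPert])⟩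

/-! ### computation of `add`, `mul`, `gsum` on embedded elements -/

lemma add_negInf (X : TGerm) : add X negInf = X := by
  unfold add
  split
  · rename_i h
    rw [gle_iff] at h
    have hm : modulus negInf = (⊥ : EReal) := rfl
    rcases h with h | ⟨h, -⟩
    · rw [hm] at h; exact absurd h (by simp)
    · cases X with
      | negInf => rfl
      | fin a => exact absurd h (by simp [modulus])
      | germ a => exact absurd h (by simp [modulus])
      | posInf => exact absurd h (by simp [modulus])
  · rfl

lemma gle_negInf (X : TGerm) : gle negInf X := by
  rw [gle_iff]
  cases X with
  | negInf => exact Or.inr ⟨rfl, by simp [isPert]⟩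
  | fin a => exact Or.inl (by simp [modulus])
  | germ a => exact Or.inl (by simp [modulus])
  | posInf => exact Or.inl (by simp [modulus])

lemma negInf_add (X : TGerm) : add negInf X = X := by
  unfold add
  rw [if_pos (gle_negInf X)]

end HemiAux
namespace HemiAux

open TGerm

local notation "ℝm" => WithBot ℝ

@[simp] lemma mul_negInf_right (γ : TGerm) : γ.mul negInf = negInf := by
  cases γ <;> rfl

@[simp] lemma mul_negInf_left (γ : TGerm) : TGerm.mul negInf γ = negInf := by
  cases γ <;> rfl

lemma mul_fin_zero (v : ℝm) : (fin 0).mul (toGerm v) = toGerm v := by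
  cases v using WithBot.recBotCoe with
  | bot => rfl
  | coe a => show fin (0 + a) = fin a; rw [zero_add]

lemma gsum_all_negInf {m : ℕ} (f : Fin m → TGerm) (h : ∀ i, f i = negInf) :
    gsum f = negInf := by
  unfold gsum
  have key : ∀ l : List TGerm, (∀ g ∈ l, g = negInf) → l.foldr add negInf = negInf := by
    intro l
    induction l with
    | nil => intro _; rfl
    | cons a l ih =>
        intro hl
        rw [List.foldr_cons, ih (fun g hg => hl g (List.mem_cons_of_mem _ hg)),
          hl a List.mem_cons_self, negInf_add]
  exact key _ (by
    intro g hg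
    rw [List.mem_ofFn] at hg
    obtain ⟨i, rfl⟩ := hg
    exact h i)

lemma gsum_single {m : ℕ} (t : Fin m) (f : Fin m → TGerm)
    (h : ∀ i, i ≠ t → f i = negInf) : gsum f = f t := by
  induction m with
  | zero => exact absurd t.2 (by simp)
  | succ m ih =>
      unfold gsum
      rw [List.ofFn_succ, List.foldr_cons]
      rcases eq_or_ne t 0 with rfl | ht
      · have : (List.ofFn fun i : Fin m => f i.succ).foldr add negInf = negInf := by
          have := gsum_all_negInf (fun i : Fin m => f i.succ)
            (fun i => h i.succ (Fin.succ_ne_zero i))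
          unfold gsum at this; exact this
        rw [this, add_negInf]
      · obtain ⟨t', rfl⟩ := Fin.exists_succ_eq.2 ht
        have : (List.ofFn fun i : Fin m => f i.succ).foldr add negInf = f t'.succ := by
          have := ih t' (fun i : Fin m => f i.succ) (fun i hi => h i.succ (by
            simpa [Fin.succ_inj] using hi))
          unfold gsum at this; exact this
        rw [this, h 0 (Ne.symm (Fin.succ_ne_zero t')), negInf_add]

/-- The left-hand side of a "box-type" constraint. -/
lemma lhs_box {m : ℕ} (x : Fin m → ℝm) :
    TGerm.add (toGerm ((0:ℝ) : ℝm))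
      (TGerm.gsum fun i : Fin m => (toGerm (⊥ : ℝm)).mul (toGerm (x i))) = fin 0 := by
  rw [gsum_all_negInf _ (fun i => by rw [toGerm_bot, mul_negInf_left]), toGerm_coe, add_negInf]

lemma lhs_coord {m : ℕ} (t : Fin m) (x : Fin m → ℝm) :
    TGerm.add (toGerm (⊥ : ℝm))
      (TGerm.gsum fun i : Fin m =>
        (toGerm (if i = t then ((0:ℝ) : ℝm) else ⊥)).mul (toGerm (x i))) = toGerm (x t) := by
  rw [toGerm_bot, gsum_single t _ (fun i hi => by rw [if_neg hi, toGerm_bot, mul_negInf_left]), if_pos rfl,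
    toGerm_coe, mul_fin_zero, negInf_add]

end HemiAux
namespace HemiAux

open TGerm

local notation "ℝm" => WithBot ℝ

variable {n : ℕ}

/-! ### tropical convexity helpers -/

lemma tc_join {C : Set (Fin n → ℝm)} (hC : TropConvex C) {u v : Fin n → ℝm}
    (hu : u ∈ C) (hv : v ∈ C) : (fun i => max (u i) (v i)) ∈ C := by
  have := hC u hu v hv 0 0 (by simp)
  simpa using this

lemma tc_sup {C : Set (Fin n → ℝm)} (hC : TropConvex C) {u : Fin n → ℝm} (hu : u ∈ C)
    {ι : Type} (v : ι → Fin n → ℝm) (lam : ι → ℝm) (s : Finset ι)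
    (hv : ∀ i ∈ s, v i ∈ C) (hlam : ∀ i ∈ s, lam i ≤ 0) :
    (fun j => max (u j) (s.sup (fun i => lam i + v i j))) ∈ C := by
  classical
  induction s using Finset.induction_on with
  | empty => simpa using hu
  | @insert a s ha ih =>
      have hprev := ih (fun i hi => hv i (Finset.mem_insert_of_mem hi))
        (fun i hi => hlam i (Finset.mem_insert_of_mem hi))
      have hcomb := hC _ hprev (v a) (hv a (Finset.mem_insert_self a s)) 0 (lam a)
        (max_eq_left (hlam a (Finset.mem_insert_self a s)))
      have heq : (fun i => max ((0 : ℝm) + max (u i) (s.sup fun i' => lam i' + v i' i))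
          (lam a + v a i)) =
          (fun j => max (u j) ((insert a s).sup fun i => lam i + v i j)) := by
        funext j
        rw [Finset.sup_insert, zero_add]
        rw [max_comm (lam a + v a j) (s.sup fun i => lam i + v i j), ← max_assoc]
      rw [heq] at hcomb
      exact hcomb

/-! ### corners and boxes -/

def Corner (t : Fin n) (d₀ : ℝ) (d : Fin n → EReal) : Set (Fin n → ℝm) :=
  {x | (d₀ : EReal) ≤ rmaxToEReal (x t) ∧ ∀ j, d j + rmaxToEReal (x j) ≤ rmaxToEReal (x t)}

def Box (c : Fin n → ℝm) : Set (Fin n → ℝm) := {x | ∀ j, x j ≤ c j}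

def CP (H : Set (Fin n → ℝm)) (t : Fin n) : Set (ℝ × (Fin n → EReal)) :=
  {p | p.2 t ≤ 0 ∧ Corner t p.1 p.2 ⊆ Hᶜ}

def BP (H : Set (Fin n → ℝm)) : Set (Fin n → ℝm) := {c | Box c ⊆ Hᶜ}

/-! ### closure of box parameters under join -/

lemma BP_sup {H : Set (Fin n → ℝm)} (h2 : TropConvex Hᶜ) {c c' : Fin n → ℝm}
    (hc : c ∈ BP H) (hc' : c' ∈ BP H) : (fun j => max (c j) (c' j)) ∈ BP H := by
  intro x hx
  have hxb : ∀ j, x j ≤ max (c j) (c' j) := hx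
  have hp : (fun j => min (x j) (c j)) ∈ Box c := fun j => min_le_right _ _
  have hq : (fun j => min (x j) (c' j)) ∈ Box c' := fun j => min_le_right _ _
  have hj := tc_join h2 (hc hp) (hc' hq)
  have hxe : (fun i => max (min (x i) (c i)) (min (x i) (c' i))) = x := by
    funext j
    rw [← min_max_distrib_left, min_eq_left (hxb j)]
  rwa [hxe] at hj

noncomputable def csup (H : Set (Fin n → ℝm)) (j : Fin n) : EReal :=
  sSup ((fun c => rmaxToEReal (c j)) '' BP H)

def AttB (H : Set (Fin n → ℝm)) (j : Fin n) : Prop :=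
  csup H j ∈ (fun c => rmaxToEReal (c j)) '' BP H

lemma mem_unionBox_iff {H : Set (Fin n → ℝm)} (h2 : TropConvex Hᶜ)
    (hne : (BP H).Nonempty) (x : Fin n → ℝm) :
    (∃ c ∈ BP H, x ∈ Box c) ↔
      ∀ j, if AttB H j then rmaxToEReal (x j) ≤ csup H j
        else rmaxToEReal (x j) < csup H j := by
  constructor
  · rintro ⟨c, hc, hxc⟩ j
    have h1 : rmaxToEReal (x j) ≤ rmaxToEReal (c j) := rV_le_iff.2 (hxc j)
    have h2' : rmaxToEReal (c j) ≤ csup H j := le_sSup ⟨c, hc, rfl⟩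
    by_cases hA : AttB H j
    · rw [if_pos hA]; exact h1.trans h2'
    · rw [if_neg hA]
      refine lt_of_le_of_lt h1 (lt_of_le_of_ne h2' ?_)
      intro he
      exact hA ⟨c, hc, he⟩
  · intro hcond
    have key : ∀ s : Finset (Fin n), ∃ c ∈ BP H, ∀ j ∈ s, x j ≤ c j := by
      intro s
      induction s using Finset.induction_on with
      | empty => exact ⟨hne.choose, hne.choose_spec, by simp⟩
      | @insert a s ha ih =>
          obtain ⟨c, hc, hcs⟩ := ih
          have hwit : ∃ c' ∈ BP H, x a ≤ c' a := by
            have := hcond a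
            by_cases hA : AttB H a
            · rw [if_pos hA] at this
              obtain ⟨c', hc', he⟩ := hA
              refine ⟨c', hc', rV_le_iff.1 ?_⟩
              rw [show rmaxToEReal (c' a) = csup H a from he]
              exact this
            · rw [if_neg hA] at this
              obtain ⟨e, ⟨c', hc', rfl⟩, hlt⟩ := lt_sSup_iff.1 this
              exact ⟨c', hc', rV_le_iff.1 (le_of_lt hlt)⟩
          obtain ⟨c', hc', hca⟩ := hwit
          refine ⟨fun j => max (c' j) (c j), BP_sup h2 hc' hc, ?_⟩
          intro j hj
          rcases Finset.mem_insert.1 hj with rfl | hj'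
          · exact le_max_of_le_left hca
          · exact le_max_of_le_right (hcs j hj')
    obtain ⟨c, hc, hcb⟩ := key Finset.univ
    exact ⟨c, hc, fun j => hcb j (Finset.mem_univ j)⟩

end HemiAux
namespace HemiAux

open TGerm

local notation "ℝm" => WithBot ℝ

variable {n : ℕ}

lemma wb_cancel (a : ℝ) (x : ℝm) : (a : ℝm) + (((-a : ℝ) : ℝm) + x) = x := by
  cases x using WithBot.recBotCoe with
  | bot => rw [WithBot.add_bot, WithBot.add_bot]
  | coe b =>
      rw [← WithBot.coe_add, ← WithBot.coe_add]
      norm_num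

lemma toRm_coe (a : ℝ) : toRm ((a : ℝ) : EReal) = (a : ℝm) := by
  unfold toRm
  rw [dif_neg (EReal.coe_ne_top a), dif_neg (EReal.coe_ne_bot a), EReal.toReal_coe]

lemma toRm_bot : toRm (⊥ : EReal) = (⊥ : ℝm) := by
  unfold toRm
  rw [dif_neg (by simp : (⊥:EReal) ≠ ⊤), dif_pos rfl]

lemma CP_min_aux {H : Set (Fin n → ℝm)} (h2 : TropConvex Hᶜ) {t : Fin n}
    {d₀ e₀ : ℝ} {d e : Fin n → EReal} (hde : e₀ ≤ d₀) (hdt : d t ≤ 0) (het : e t ≤ 0)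
    (hd : Corner t d₀ d ⊆ Hᶜ) (he : Corner t e₀ e ⊆ Hᶜ) :
    Corner t (min d₀ e₀) (fun j => min (d j) (e j)) ⊆ Hᶜ := by
  intro x hx
  obtain ⟨hx0, hxj⟩ := hx
  -- x t is a real number r
  obtain ⟨r, hr⟩ : ∃ r : ℝ, x t = (r : ℝm) := by
    cases hxt : x t using WithBot.recBotCoe with
    | bot =>
        rw [hxt] at hx0
        simp only [rV_bot, le_bot_iff] at hx0
        exact absurd hx0 (EReal.coe_ne_bot _)
    | coe r => exact ⟨r, rfl⟩
  have hR : rmaxToEReal (x t) = (r : EReal) := by rw [hr, rV_coe]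
  have hx0' : (e₀ : EReal) ≤ (r : EReal) := by
    rw [← hR]
    rw [min_eq_right hde] at hx0
    exact hx0
  -- the q-point, lying in the e-corner
  set q : Fin n → ℝm := fun j =>
    if j = t then x t else if e j + rmaxToEReal (x j) ≤ (r : EReal) then x j
      else toRm ((r : EReal) - e j) with hqdef
  have hq_le : ∀ j, q j ≤ x j := by
    intro j
    by_cases hjt : j = t
    · simp [hqdef, hjt]
    · by_cases hcase : e j + rmaxToEReal (x j) ≤ (r : EReal)
      · simp [hqdef, hjt, hcase]
      · have hq_eq : q j = toRm ((r : EReal) - e j) := by simp [hqdef, hjt, hcase]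
        rw [hq_eq]
        -- x j must be real and e j ≠ ⊥
        have hej_ne_bot : e j ≠ ⊥ := by
          intro h
          rw [h, EReal.bot_add] at hcase
          exact hcase bot_le
        cases hxj' : x j using WithBot.recBotCoe with
        | bot =>
            exfalso
            rw [hxj', rV_bot, EReal.add_bot] at hcase
            exact hcase bot_le
        | coe a =>
            rcases eq_or_ne (e j) ⊤ with hety | hety
            · rw [hety, EReal.sub_top]
              simp [toRm]
            · -- e j is real
              lift e j to ℝ using ⟨hety, hej_ne_bot⟩ with ej hej
              rw [hxj', rV_coe, ← EReal.coe_add, EReal.coe_le_coe_iff, not_le] at hcase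
              rw [← EReal.coe_sub, toRm_coe]
              exact_mod_cast le_of_lt (by linarith : r - ej < a)
  have hqt : q t = x t := by simp [hqdef]
  have hq_mem : q ∈ Corner t e₀ e := by
    constructor
    · rw [hqt, hR]; exact hx0'
    · intro j
      rw [hqt, hR]
      by_cases hjt : j = t
      · subst hjt
        rw [hqt, hR]
        calc e j + (r : EReal) ≤ 0 + (r : EReal) := add_le_add_left het _
        _ = (r : EReal) := zero_add _
      · by_cases hcase : e j + rmaxToEReal (x j) ≤ (r : EReal)
        · have : q j = x j := by simp [hqdef, hjt, hcase]
          rw [this]; exact hcase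
        · have hq_eq : q j = toRm ((r : EReal) - e j) := by simp [hqdef, hjt, hcase]
          have hej_ne_bot : e j ≠ ⊥ := by
            intro h
            rw [h, EReal.bot_add] at hcase
            exact hcase bot_le
          rcases eq_or_ne (e j) ⊤ with hety | hety
          · rw [hq_eq, hety, EReal.sub_top, toRm_bot, rV_bot, EReal.add_bot]
            exact bot_le
          · lift e j to ℝ using ⟨hety, hej_ne_bot⟩ with ej hej
            rw [hq_eq, ← EReal.coe_sub, toRm_coe, rV_coe, ← EReal.coe_add, EReal.coe_le_coe_iff]
            linarith
  -- the p-point, lying in the d-corner after rescaling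
  set lam : ℝ := min 0 (r - d₀) with hlam
  set p : Fin n → ℝm := fun j =>
    if j = t ∨ ¬ (e j + rmaxToEReal (x j) ≤ (r : EReal)) then ((-lam : ℝ) : ℝm) + x j
      else ⊥ with hpdef
  have hbound : ∀ j, (j = t ∨ ¬ (e j + rmaxToEReal (x j) ≤ (r : EReal))) →
      d j + rmaxToEReal (x j) ≤ (r : EReal) := by
    rintro j (rfl | hJ)
    · rw [hR]
      calc d j + (r : EReal) ≤ 0 + (r : EReal) := add_le_add_left hdt _
      _ = (r : EReal) := zero_add _
    · have hmin : d j ⊓ e j + rmaxToEReal (x j) ≤ (r : EReal) := by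
        have h' := hxj j
        rw [hR] at h'
        exact h'
      rcases le_total (d j) (e j) with hc | hc
      · rw [min_eq_left hc] at hmin; exact hmin
      · rw [min_eq_right hc] at hmin; exact absurd hmin hJ
  have hp_mem : p ∈ Corner t d₀ d := by
    have hpt : p t = ((-lam : ℝ) : ℝm) + x t := by simp [hpdef]
    have hptv : rmaxToEReal (p t) = ((-lam + r : ℝ) : EReal) := by
      rw [hpt, hr, ← WithBot.coe_add, rV_coe]
    constructor
    · rw [hptv, EReal.coe_le_coe_iff]
      have : lam ≤ r - d₀ := min_le_right _ _
      linarith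
    · intro j
      by_cases hbr : j = t ∨ ¬ (e j + rmaxToEReal (x j) ≤ (r : EReal))
      · have hpj : p j = ((-lam : ℝ) : ℝm) + x j := by
          simp only [hpdef]; rw [if_pos hbr]
        rw [hpj, hptv, rV_add, rV_coe]
        have h1 : d j + rmaxToEReal (x j) ≤ (r : EReal) := hbound j hbr
        calc d j + (((-lam : ℝ) : EReal) + rmaxToEReal (x j))
            = ((-lam : ℝ) : EReal) + (d j + rmaxToEReal (x j)) := by
              rw [add_left_comm]
        _ ≤ ((-lam : ℝ) : EReal) + (r : EReal) := add_le_add_right h1 _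
        _ = ((-lam + r : ℝ) : EReal) := by rw [← EReal.coe_add]
      · have hpj : p j = ⊥ := by simp only [hpdef]; rw [if_neg hbr]
        rw [hpj, rV_bot, EReal.add_bot, hptv]
        exact bot_le
  -- x is a tropical combination of p and q
  have hlam_le : ((lam : ℝ) : ℝm) ≤ 0 := by
    rw [show (0 : ℝm) = ((0:ℝ) : ℝm) from rfl, WithBot.coe_le_coe]
    exact min_le_left _ _
  have hcomb := h2 p (hd hp_mem) q (he hq_mem) ((lam : ℝ) : ℝm) 0 (max_eq_right hlam_le)
  have hxe : (fun i => max (((lam : ℝ) : ℝm) + p i) ((0 : ℝm) + q i)) = x := by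
    funext j
    rw [zero_add]
    by_cases hbr : j = t ∨ ¬ (e j + rmaxToEReal (x j) ≤ (r : EReal))
    · have hpj : p j = ((-lam : ℝ) : ℝm) + x j := by
          simp only [hpdef]; rw [if_pos hbr]
      rw [hpj, wb_cancel]
      exact max_eq_left (hq_le j)
    · have hpj : p j = ⊥ := by simp only [hpdef]; rw [if_neg hbr]
      push_neg at hbr
      obtain ⟨hjt, hcase⟩ := hbr
      have hqj : q j = x j := by simp [hqdef, hjt, hcase]
      rw [hpj, WithBot.add_bot, hqj]
      exact max_eq_right bot_le
  rwa [hxe] at hcomb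

lemma CP_min {H : Set (Fin n → ℝm)} (h2 : TropConvex Hᶜ) {t : Fin n}
    {p q : ℝ × (Fin n → EReal)} (hp : p ∈ CP H t) (hq : q ∈ CP H t) :
    (min p.1 q.1, fun j => min (p.2 j) (q.2 j)) ∈ CP H t := by
  constructor
  · exact le_trans (min_le_left _ _) hp.1
  · rcases le_total q.1 p.1 with hc | hc
    · exact CP_min_aux h2 hc hp.1 hq.1 hp.2 hq.2
    · have := CP_min_aux h2 hc hq.1 hp.1 hq.2 hp.2
      have heq : (fun j => min (q.2 j) (p.2 j)) = (fun j => min (p.2 j) (q.2 j)) := by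
        funext j; rw [min_comm]
      rw [min_comm q.1 p.1, heq] at this
      exact this

end HemiAux
namespace HemiAux

open TGerm

local notation "ℝm" => WithBot ℝ

variable {n : ℕ}

lemma ereal_lt_sub {w : EReal} {a r : ℝ} (h : w + (a : EReal) < (r : EReal)) :
    w < ((r - a : ℝ) : EReal) := by
  induction w using EReal.rec with
  | bot => exact EReal.bot_lt_coe _
  | coe b =>
      rw [← EReal.coe_add, EReal.coe_lt_coe_iff] at h
      rw [EReal.coe_lt_coe_iff]
      linarith
  | top =>
      rw [EReal.top_add_coe] at h
      exact absurd h (by simp)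

lemma ereal_sub_lt {w : EReal} {a r : ℝ} (h : w < ((r - a : ℝ) : EReal)) :
    w + (a : EReal) ≤ (r : EReal) := by
  induction w using EReal.rec with
  | bot => rw [EReal.bot_add]; exact bot_le
  | coe b =>
      rw [EReal.coe_lt_coe_iff] at h
      rw [← EReal.coe_add, EReal.coe_le_coe_iff]
      linarith
  | top => exact absurd h (by simp)

noncomputable def beta0 (H : Set (Fin n → ℝm)) (t : Fin n) : EReal :=
  sInf ((fun p : ℝ × (Fin n → EReal) => ((p.1 : ℝ) : EReal)) '' CP H t)

noncomputable def betaj (H : Set (Fin n → ℝm)) (t j : Fin n) : EReal :=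
  sInf ((fun p : ℝ × (Fin n → EReal) => p.2 j) '' CP H t)

def Att0 (H : Set (Fin n → ℝm)) (t : Fin n) : Prop :=
  beta0 H t ∈ (fun p : ℝ × (Fin n → EReal) => ((p.1 : ℝ) : EReal)) '' CP H t

def Attj (H : Set (Fin n → ℝm)) (t j : Fin n) : Prop :=
  betaj H t j ∈ (fun p : ℝ × (Fin n → EReal) => p.2 j) '' CP H t

lemma mem_unionCorner_iff {H : Set (Fin n → ℝm)} (h2 : TropConvex Hᶜ) {t : Fin n}
    (hne : (CP H t).Nonempty) (x : Fin n → ℝm) (r : ℝ) (hr : x t = (r : ℝm)) :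
    (∃ p ∈ CP H t, x ∈ Corner t p.1 p.2) ↔
      ((if Att0 H t then beta0 H t ≤ (r : EReal) else beta0 H t < (r : EReal)) ∧
        ∀ j, if Attj H t j then betaj H t j + rmaxToEReal (x j) ≤ (r : EReal)
          else betaj H t j + rmaxToEReal (x j) < (r : EReal)) := by
  have hR : rmaxToEReal (x t) = (r : EReal) := by rw [hr, rV_coe]
  constructor
  · rintro ⟨p, hp, hx0, hxj⟩
    rw [hR] at hx0
    have hmem0 : ((p.1 : ℝ) : EReal) ∈
        (fun p : ℝ × (Fin n → EReal) => ((p.1 : ℝ) : EReal)) '' CP H t := ⟨p, hp, rfl⟩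
    constructor
    · by_cases hA : Att0 H t
      · rw [if_pos hA]
        exact le_trans (sInf_le hmem0) hx0
      · rw [if_neg hA]
        refine lt_of_lt_of_le (lt_of_le_of_ne (sInf_le hmem0) ?_) hx0
        intro he
        exact hA ⟨p, hp, he.symm⟩
    · intro j
      have hxjj : p.2 j + rmaxToEReal (x j) ≤ (r : EReal) := by
        have h' := hxj j
        rw [hR] at h'
        exact h'
      have hmem : p.2 j ∈ (fun p : ℝ × (Fin n → EReal) => p.2 j) '' CP H t := ⟨p, hp, rfl⟩
      by_cases hA : Attj H t j
      · rw [if_pos hA]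
        exact le_trans (add_le_add_left (sInf_le hmem) _) hxjj
      · rw [if_neg hA]
        have hlt : betaj H t j < p.2 j := by
          refine lt_of_le_of_ne (sInf_le hmem) ?_
          intro he
          exact hA ⟨p, hp, he.symm⟩
        cases hxv : x j using WithBot.recBotCoe with
        | bot =>
            rw [rV_bot, EReal.add_bot]
            exact EReal.bot_lt_coe r
        | coe a =>
            rw [rV_coe]
            rw [hxv, rV_coe] at hxjj
            exact lt_of_lt_of_le (EReal.add_lt_add_right_coe hlt a) hxjj
  · rintro ⟨h0, hj⟩
    have hw0 : ∃ p ∈ CP H t, ((p.1 : ℝ) : EReal) ≤ (r : EReal) := by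
      by_cases hA : Att0 H t
      · rw [if_pos hA] at h0
        obtain ⟨p, hp, he⟩ := hA
        exact ⟨p, hp, le_trans (le_of_eq he) h0⟩
      · rw [if_neg hA] at h0
        obtain ⟨w, ⟨p, hp, rfl⟩, hlt⟩ := sInf_lt_iff.1 h0
        exact ⟨p, hp, le_of_lt hlt⟩
    have hw : ∀ j, ∃ p ∈ CP H t, p.2 j + rmaxToEReal (x j) ≤ (r : EReal) := by
      intro j
      cases hxv : x j using WithBot.recBotCoe with
      | bot =>
          obtain ⟨p, hp⟩ := hne
          exact ⟨p, hp, by rw [rV_bot, EReal.add_bot]; exact bot_le⟩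
      | coe a =>
          have h' := hj j
          rw [hxv, rV_coe] at h'
          by_cases hA : Attj H t j
          · rw [if_pos hA] at h'
            obtain ⟨p, hp, he⟩ := hA
            refine ⟨p, hp, ?_⟩
            rw [rV_coe]
            exact le_trans (add_le_add_left (le_of_eq he) _) h'
          · rw [if_neg hA] at h'
            have hlt : betaj H t j < ((r - a : ℝ) : EReal) := ereal_lt_sub h'
            obtain ⟨w, ⟨p, hp, rfl⟩, hltw⟩ := sInf_lt_iff.1 hlt
            exact ⟨p, hp, by rw [rV_coe]; exact ereal_sub_lt hltw⟩
    have key : ∀ s : Finset (Fin n), ∃ p ∈ CP H t, ((p.1 : ℝ) : EReal) ≤ (r : EReal) ∧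
        ∀ j ∈ s, p.2 j + rmaxToEReal (x j) ≤ (r : EReal) := by
      intro s
      induction s using Finset.induction_on with
      | empty =>
          obtain ⟨p, hp, hp1⟩ := hw0
          exact ⟨p, hp, hp1, by simp⟩
      | @insert a s ha ih =>
          obtain ⟨p, hp, hp1, hps⟩ := ih
          obtain ⟨p', hp', hp'a⟩ := hw a
          refine ⟨(min p.1 p'.1, fun j => min (p.2 j) (p'.2 j)), CP_min h2 hp hp', ?_, ?_⟩
          · refine le_trans ?_ hp1
            exact_mod_cast min_le_left p.1 p'.1
          · intro j hj'
            rcases Finset.mem_insert.1 hj' with rfl | hj''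
            · exact le_trans (add_le_add_left (min_le_right _ _) _) hp'a
            · exact le_trans (add_le_add_left (min_le_left _ _) _) (hps j hj'')
    obtain ⟨p, hp, hp1, hps⟩ := key Finset.univ
    exact ⟨p, hp, ⟨by rw [hR]; exact hp1, fun j => by rw [hR]; exact hps j (Finset.mem_univ j)⟩⟩

end HemiAux
namespace HemiAux

open TGerm

local notation "ℝm" => WithBot ℝ

variable {n : ℕ}

/-- coefficients of the semispace-complement corner at `z`. -/
noncomputable def cornD (z : Fin n → ℝm) (r : ℝ) : Fin n → EReal :=
  fun j => (r : EReal) - rmaxToEReal (z j)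

lemma corner_self {z : Fin n → ℝm} {t : Fin n} {r : ℝ} (hzt : z t = (r : ℝm)) :
    z ∈ Corner t r (cornD z r) := by
  constructor
  · rw [hzt, rV_coe]
  · intro j
    rw [hzt, rV_coe]
    unfold cornD
    cases hzj : z j using WithBot.recBotCoe with
    | bot => rw [rV_bot, EReal.add_bot]; exact bot_le
    | coe a => rw [rV_coe, ← EReal.coe_sub, ← EReal.coe_add]
               norm_num

lemma cornD_t_le {z : Fin n → ℝm} {t : Fin n} {r : ℝ} (hzt : z t = (r : ℝm)) :
    cornD z r t ≤ 0 := by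
  unfold cornD
  rw [hzt, rV_coe, ← EReal.coe_sub]
  norm_num

lemma coverage {H : Set (Fin n → ℝm)} (h1 : TropConvex H) {z : Fin n → ℝm} (hz : z ∉ H) :
    (∃ c ∈ BP H, z ∈ Box c) ∨ ∃ t : Fin n, ∃ p ∈ CP H t, z ∈ Corner t p.1 p.2 := by
  by_cases hbox : Box z ⊆ Hᶜ
  · exact Or.inl ⟨z, hbox, fun j => le_refl _⟩
  by_cases hcor : ∃ t : Fin n, ∃ r : ℝ, z t = (r : ℝm) ∧ Corner t r (cornD z r) ⊆ Hᶜ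
  · obtain ⟨t, r, hzt, hsub⟩ := hcor
    exact Or.inr ⟨t, (r, cornD z r), ⟨cornD_t_le hzt, hsub⟩, corner_self hzt⟩
  -- otherwise derive a contradiction: z ∈ H
  exfalso
  push_neg at hcor
  obtain ⟨u0, hu0box, hu0H'⟩ := Set.not_subset.1 hbox
  have hu0H : u0 ∈ H := by simpa using hu0H'
  -- real values of z
  set ζ : Fin n → ℝ := fun t => WithBot.unbotD 0 (z t) with hζ
  have hzeta : ∀ t : Fin n, z t ≠ ⊥ → z t = ((ζ t : ℝ) : ℝm) := by
    intro t ht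
    cases hzt : z t using WithBot.recBotCoe with
    | bot => exact absurd hzt ht
    | coe a => rw [hζ]; simp [hzt]
  have hu : ∀ t : Fin n, ∃ u : Fin n → ℝm,
      z t ≠ ⊥ → u ∈ Corner t (ζ t) (cornD z (ζ t)) ∧ u ∈ H := by
    intro t
    by_cases ht : z t = ⊥
    · exact ⟨z, fun h => absurd ht h⟩
    · obtain ⟨u, hu1, hu2⟩ := Set.not_subset.1 (hcor t (ζ t) (hzeta t ht))
      exact ⟨u, fun _ => ⟨hu1, by simpa using hu2⟩⟩
  choose u huspec using hu
  classical
  set S : Finset (Fin n) := Finset.univ.filter (fun t => z t ≠ ⊥) with hS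
  have hSmem : ∀ t : Fin n, t ∈ S ↔ z t ≠ ⊥ := by
    intro t; simp [hS]
  -- u t t is real, with value σ t
  set σ : Fin n → ℝ := fun t => WithBot.unbotD 0 (u t t) with hσ
  have husig : ∀ t ∈ S, u t t = ((σ t : ℝ) : ℝm) := by
    intro t ht
    have hc := (huspec t ((hSmem t).1 ht)).1.1
    cases hut : u t t using WithBot.recBotCoe with
    | bot =>
        rw [hut, rV_bot, le_bot_iff] at hc
        exact absurd hc (EReal.coe_ne_bot _)
    | coe a => rw [hσ]; simp [hut]
  have hsig_ge : ∀ t ∈ S, ζ t ≤ σ t := by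
    intro t ht
    have hc := (huspec t ((hSmem t).1 ht)).1.1
    rw [husig t ht, rV_coe, EReal.coe_le_coe_iff] at hc
    exact hc
  -- the tropical combination
  have hw := tc_sup h1 hu0H u (fun t => ((ζ t - σ t : ℝ) : ℝm)) S
    (fun t ht => (huspec t ((hSmem t).1 ht)).2)
    (fun t ht => by
      rw [show (0 : ℝm) = ((0 : ℝ) : ℝm) from rfl, WithBot.coe_le_coe]
      have := hsig_ge t ht; linarith)
  have hwz : (fun j => max (u0 j)
      (S.sup (fun t => ((ζ t - σ t : ℝ) : ℝm) + u t j))) = z := by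
    funext j
    have hcorn : ∀ t ∈ S, ((ζ t : ℝ) : EReal) - rmaxToEReal (z j) + rmaxToEReal (u t j)
        ≤ ((σ t : ℝ) : EReal) := by
      intro t ht
      have hc := (huspec t ((hSmem t).1 ht)).1.2 j
      unfold cornD at hc
      rw [husig t ht, rV_coe] at hc
      exact hc
    cases hzj : z j using WithBot.recBotCoe with
    | bot =>
        have hu0j : u0 j = ⊥ := le_bot_iff.1 (hzj ▸ hu0box j)
        have hterm : ∀ t ∈ S, ((ζ t - σ t : ℝ) : ℝm) + u t j = ⊥ := by
          intro t ht
          have hc := hcorn t ht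
          rw [hzj, rV_bot] at hc
          have hutj : u t j = ⊥ := by
            by_contra hne
            rw [show ((ζ t : ℝ) : EReal) - ⊥ = ⊤ from EReal.coe_sub_bot _,
              EReal.top_add_of_ne_bot (by rwa [ne_eq, rV_eq_bot_iff])] at hc
            exact absurd hc (by simp)
          rw [hutj, WithBot.add_bot]
        have hsup : S.sup (fun t => ((ζ t - σ t : ℝ) : ℝm) + u t j) = ⊥ := by
          rw [← le_bot_iff]
          exact Finset.sup_le (fun t ht => le_of_eq (hterm t ht))
        rw [hu0j, hsup]
        exact max_self _
    | coe ρ =>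
        have hjS : j ∈ S := (hSmem j).2 (by rw [hzj]; exact WithBot.coe_ne_bot)
        have hzj' : ζ j = ρ := by
          have := hzeta j ((hSmem j).1 hjS)
          rw [hzj] at this
          exact_mod_cast (WithBot.coe_inj.1 this).symm
        apply le_antisymm
        · apply max_le
          · rw [← hzj]; exact hu0box j
          · apply Finset.sup_le
            intro t ht
            have hc := hcorn t ht
            rw [hzj, rV_coe, ← EReal.coe_sub] at hc
            cases hutj : u t j using WithBot.recBotCoe with
            | bot => rw [WithBot.add_bot]; exact bot_le
            | coe a =>
                rw [hutj, rV_coe, ← EReal.coe_add, EReal.coe_le_coe_iff] at hc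
                rw [← WithBot.coe_add, WithBot.coe_le_coe]
                linarith
        · refine le_trans ?_ (le_max_right _ _)
          refine le_trans ?_ (Finset.le_sup hjS)
          rw [husig j hjS, ← WithBot.coe_add, WithBot.coe_le_coe]
          linarith [hzj']
  rw [hwz] at hw
  exact hz hw

end HemiAux
namespace HemiAux

open TGerm

local notation "ℝm" => WithBot ℝ

variable {n : ℕ}

noncomputable def gamB0 (H : Set (Fin n → ℝm)) : TGerm :=
  if BP H = ∅ then posInf else negInf

noncomputable def gamB (H : Set (Fin n → ℝm)) (j : Fin n) : TGerm :=
  if BP H = ∅ then negInf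
  else if csup H j = ⊤ then negInf
  else if csup H j = ⊥ then posInf
  else if AttB H j then germ (-(csup H j).toReal) else fin (-(csup H j).toReal)

noncomputable def gamC0 (H : Set (Fin n → ℝm)) (t : Fin n) : TGerm :=
  if CP H t = ∅ then posInf
  else if beta0 H t = ⊥ then negInf
  else if Att0 H t then germ (beta0 H t).toReal else fin (beta0 H t).toReal

noncomputable def gamC (H : Set (Fin n → ℝm)) (t j : Fin n) : TGerm :=
  if CP H t = ∅ then negInf
  else if betaj H t j = ⊤ then posInf
  else if betaj H t j = ⊥ then negInf
  else if Attj H t j then germ (betaj H t j).toReal else fin (betaj H t j).toReal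

lemma box_piece_iff {H : Set (Fin n → ℝm)} (hne : BP H ≠ ∅) (j : Fin n) (x : Fin n → ℝm) :
    gle (toGerm (((0:ℝ) : ℝm))) ((gamB H j).mul (toGerm (x j))) ↔
      ¬ (if AttB H j then rmaxToEReal (x j) ≤ csup H j
          else rmaxToEReal (x j) < csup H j) := by
  have hne' : (BP H).Nonempty := Set.nonempty_iff_ne_empty.2 hne
  rcases eq_or_ne (csup H j) ⊤ with htop | htop
  · have hAtt : ¬ AttB H j := by
      rintro ⟨c, -, he⟩
      exact rV_ne_top (c j) (he.trans htop)
    have hg : gamB H j = negInf := by rw [gamB, if_neg hne, if_pos htop]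
    rw [hg, mul_negInf_left, gle_toGerm_negInf_iff, if_neg hAtt, htop]
    simp [lt_top_iff_ne_top, rV_ne_top (x j)]
  rcases eq_or_ne (csup H j) ⊥ with hbot | hbot
  · have hAtt : AttB H j := by
      obtain ⟨c, hc⟩ := hne'
      have h1 : rmaxToEReal (c j) ≤ csup H j := le_sSup ⟨c, hc, rfl⟩
      rw [hbot, le_bot_iff] at h1
      exact ⟨c, hc, h1.trans hbot.symm⟩
    have hg : gamB H j = posInf := by rw [gamB, if_neg hne, if_neg htop, if_pos hbot]
    rw [hg, if_pos hAtt, hbot]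
    cases hxj : x j using WithBot.recBotCoe with
    | bot =>
        have : TGerm.mul posInf (toGerm (⊥ : ℝm)) = negInf := rfl
        rw [this, gle_toGerm_negInf_iff]
        simp
    | coe a =>
        have : TGerm.mul posInf (toGerm ((a : ℝ) : ℝm)) = posInf := rfl
        rw [this]
        simp only [rV_coe]
        constructor
        · intro _ hle
          exact absurd hle (by simp)
        · intro _
          exact gle_toGerm_posInf
  -- csup is a real number
  obtain ⟨cr, hcr⟩ : ∃ cr : ℝ, csup H j = ((cr : ℝ) : EReal) :=
    ⟨(csup H j).toReal, (EReal.coe_toReal htop hbot).symm⟩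
  have hcrr : (csup H j).toReal = cr := by rw [hcr, EReal.toReal_coe]
  by_cases hAtt : AttB H j
  · have hg : gamB H j = germ (-cr) := by
      rw [gamB, if_neg hne, if_neg htop, if_neg hbot, if_pos hAtt, hcrr]
    rw [hg, if_pos hAtt, hcr]
    cases hxj : x j using WithBot.recBotCoe with
    | bot =>
        have : TGerm.mul (germ (-cr)) (toGerm (⊥ : ℝm)) = negInf := rfl
        rw [this, gle_toGerm_negInf_iff]
        simp
    | coe a =>
        have : TGerm.mul (germ (-cr)) (toGerm ((a : ℝ) : ℝm)) = germ (-cr + a) := rfl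
        rw [this, gle_toGerm_germ_iff, rV_coe, EReal.coe_lt_coe_iff, rV_coe]
        rw [EReal.coe_le_coe_iff]
        constructor
        · intro h; linarith
        · intro h; push_neg at h; linarith
  · have hg : gamB H j = fin (-cr) := by
      rw [gamB, if_neg hne, if_neg htop, if_neg hbot, if_neg hAtt, hcrr]
    rw [hg, if_neg hAtt, hcr]
    cases hxj : x j using WithBot.recBotCoe with
    | bot =>
        have : TGerm.mul (fin (-cr)) (toGerm (⊥ : ℝm)) = negInf := rfl
        rw [this, gle_toGerm_negInf_iff]
        simp [EReal.bot_lt_coe]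
    | coe a =>
        have : TGerm.mul (fin (-cr)) (toGerm ((a : ℝ) : ℝm)) = fin (-cr + a) := rfl
        rw [this, gle_toGerm_fin_iff, rV_coe, EReal.coe_le_coe_iff, rV_coe,
          EReal.coe_lt_coe_iff]
        constructor
        · intro h; linarith
        · intro h; push_neg at h; linarith

end HemiAux
namespace HemiAux

open TGerm

local notation "ℝm" => WithBot ℝ

variable {n : ℕ}

lemma beta0_ne_top {H : Set (Fin n → ℝm)} {t : Fin n} (hne' : (CP H t).Nonempty) :
    beta0 H t ≠ ⊤ := by
  obtain ⟨p, hp⟩ := hne'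
  have h1 : beta0 H t ≤ ((p.1 : ℝ) : EReal) := sInf_le ⟨p, hp, rfl⟩
  exact (lt_of_le_of_lt h1 (EReal.coe_lt_top _)).ne

lemma coord_piece0_iff {H : Set (Fin n → ℝm)} {t : Fin n} (hne : CP H t ≠ ∅) (r : ℝ) :
    gle (toGerm ((r : ℝ) : ℝm)) (gamC0 H t) ↔
      ¬ (if Att0 H t then beta0 H t ≤ (r : EReal) else beta0 H t < (r : EReal)) := by
  have hne' : (CP H t).Nonempty := Set.nonempty_iff_ne_empty.2 hne
  rcases eq_or_ne (beta0 H t) ⊥ with hbot | hbot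
  · have hAtt : ¬ Att0 H t := by
      rintro ⟨p, -, he⟩
      exact EReal.coe_ne_bot p.1 (he.trans hbot)
    have hg : gamC0 H t = negInf := by rw [gamC0, if_neg hne, if_pos hbot]
    rw [hg, gle_toGerm_negInf_iff, if_neg hAtt, hbot]
    simp [EReal.bot_lt_coe]
  · obtain ⟨b, hb⟩ : ∃ b : ℝ, beta0 H t = ((b : ℝ) : EReal) :=
      ⟨(beta0 H t).toReal, (EReal.coe_toReal (beta0_ne_top hne') hbot).symm⟩
    have hbr : (beta0 H t).toReal = b := by rw [hb, EReal.toReal_coe]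
    by_cases hAtt : Att0 H t
    · have hg : gamC0 H t = germ b := by rw [gamC0, if_neg hne, if_neg hbot, if_pos hAtt, hbr]
      rw [hg, gle_toGerm_germ_iff, rV_coe, if_pos hAtt, hb, EReal.coe_lt_coe_iff,
        EReal.coe_le_coe_iff]
      constructor
      · intro h; linarith
      · intro h; push_neg at h; linarith
    · have hg : gamC0 H t = fin b := by rw [gamC0, if_neg hne, if_neg hbot, if_neg hAtt, hbr]
      rw [hg, gle_toGerm_fin_iff, rV_coe, if_neg hAtt, hb, EReal.coe_lt_coe_iff,
        EReal.coe_le_coe_iff]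
      constructor
      · intro h; linarith
      · intro h; push_neg at h; linarith

lemma coord_piecej_iff {H : Set (Fin n → ℝm)} {t : Fin n} (hne : CP H t ≠ ∅) (r : ℝ)
    (j : Fin n) (x : Fin n → ℝm) :
    gle (toGerm ((r : ℝ) : ℝm)) ((gamC H t j).mul (toGerm (x j))) ↔
      ¬ (if Attj H t j then betaj H t j + rmaxToEReal (x j) ≤ (r : EReal)
          else betaj H t j + rmaxToEReal (x j) < (r : EReal)) := by
  rcases eq_or_ne (betaj H t j) ⊤ with htop | htop
  · have hg : gamC H t j = posInf := by rw [gamC, if_neg hne, if_pos htop]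
    rw [hg, htop]
    cases hxj : x j using WithBot.recBotCoe with
    | bot =>
        have hm : TGerm.mul posInf (toGerm (⊥ : ℝm)) = negInf := rfl
        rw [hm, gle_toGerm_negInf_iff, rV_bot, EReal.add_bot]
        constructor
        · intro h; exact absurd h (by simp)
        · intro h
          exfalso
          apply h
          by_cases hA : Attj H t j
          · rw [if_pos hA]; exact bot_le
          · rw [if_neg hA]; exact EReal.bot_lt_coe r
    | coe a =>
        have hm : TGerm.mul posInf (toGerm ((a : ℝ) : ℝm)) = posInf := rfl
        rw [hm, rV_coe, EReal.top_add_coe]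
        constructor
        · intro _
          by_cases hA : Attj H t j
          · rw [if_pos hA]
            intro hle
            exact absurd hle (by simp)
          · rw [if_neg hA]
            intro hlt
            exact absurd hlt (by simp)
        · intro _
          exact gle_toGerm_posInf
  rcases eq_or_ne (betaj H t j) ⊥ with hbot | hbot
  · have hg : gamC H t j = negInf := by rw [gamC, if_neg hne, if_neg htop, if_pos hbot]
    rw [hg, mul_negInf_left, gle_toGerm_negInf_iff, hbot, EReal.bot_add]
    constructor
    · intro h; exact absurd h (by simp)
    · intro h
      exfalso
      apply h
      by_cases hA : Attj H t j
      · rw [if_pos hA]; exact bot_le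
      · rw [if_neg hA]; exact EReal.bot_lt_coe r
  obtain ⟨b, hb⟩ : ∃ b : ℝ, betaj H t j = ((b : ℝ) : EReal) :=
    ⟨(betaj H t j).toReal, (EReal.coe_toReal htop hbot).symm⟩
  have hbr : (betaj H t j).toReal = b := by rw [hb, EReal.toReal_coe]
  by_cases hAtt : Attj H t j
  · have hg : gamC H t j = germ b := by
      rw [gamC, if_neg hne, if_neg htop, if_neg hbot, if_pos hAtt, hbr]
    rw [hg, if_pos hAtt, hb]
    cases hxj : x j using WithBot.recBotCoe with
    | bot =>
        have hm : TGerm.mul (germ b) (toGerm (⊥ : ℝm)) = negInf := rfl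
        rw [hm, gle_toGerm_negInf_iff, rV_bot, EReal.add_bot]
        simp [EReal.bot_lt_coe]
    | coe a =>
        have hm : TGerm.mul (germ b) (toGerm ((a : ℝ) : ℝm)) = germ (b + a) := rfl
        rw [hm, gle_toGerm_germ_iff, rV_coe, rV_coe, ← EReal.coe_add,
          EReal.coe_lt_coe_iff, EReal.coe_le_coe_iff]
        constructor
        · intro h; linarith
        · intro h; push_neg at h; linarith
  · have hg : gamC H t j = fin b := by
      rw [gamC, if_neg hne, if_neg htop, if_neg hbot, if_neg hAtt, hbr]
    rw [hg, if_neg hAtt, hb]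
    cases hxj : x j using WithBot.recBotCoe with
    | bot =>
        have hm : TGerm.mul (fin b) (toGerm (⊥ : ℝm)) = negInf := rfl
        rw [hm, gle_toGerm_negInf_iff, rV_bot, EReal.add_bot]
        simp [EReal.bot_lt_coe]
    | coe a =>
        have hm : TGerm.mul (fin b) (toGerm ((a : ℝ) : ℝm)) = fin (b + a) := rfl
        rw [hm, gle_toGerm_fin_iff, rV_coe, rV_coe, ← EReal.coe_add,
          EReal.coe_le_coe_iff, EReal.coe_lt_coe_iff]
        constructor
        · intro h; linarith
        · intro h; push_neg at h; linarith

end HemiAux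
namespace HemiAux

open TGerm

local notation "ℝm" => WithBot ℝ

variable {n : ℕ}

lemma box_constraint_iff {H : Set (Fin n → ℝm)} (h2 : TropConvex Hᶜ) (x : Fin n → ℝm) :
    gle (TGerm.add (toGerm (((0:ℝ) : ℝm)))
        (TGerm.gsum fun i => (toGerm ((⊥ : ℝm))).mul (toGerm (x i))))
      (TGerm.add (gamB0 H) (TGerm.gsum fun i => (gamB H i).mul (toGerm (x i)))) ↔
    ¬ ∃ c ∈ BP H, x ∈ Box c := by
  rw [lhs_box x, show fin 0 = toGerm (((0:ℝ) : ℝm)) from rfl]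
  by_cases hbp : BP H = ∅
  · have hg : gamB0 H = posInf := by rw [gamB0, if_pos hbp]
    rw [hg]
    constructor
    · intro _
      rintro ⟨c, hc, -⟩
      rw [hbp] at hc
      exact hc
    · intro _
      exact gle_add_iff.2 (Or.inl gle_toGerm_posInf)
  · have hne' : (BP H).Nonempty := Set.nonempty_iff_ne_empty.2 hbp
    have hg : gamB0 H = negInf := by rw [gamB0, if_neg hbp]
    rw [hg, gle_add_iff, gle_gsum_iff, gle_toGerm_negInf_iff]
    rw [mem_unionBox_iff h2 hne' x]
    have hzb : ((0:ℝ) : ℝm) ≠ ⊥ := WithBot.coe_ne_bot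
    constructor
    · rintro (h | h | ⟨i, hi⟩)
      · exact absurd h hzb
      · exact absurd h hzb
      · intro hall
        exact (box_piece_iff hbp i x).1 hi (hall i)
    · intro h
      rw [not_forall] at h
      obtain ⟨i, hi⟩ := h
      exact Or.inr (Or.inr ⟨i, (box_piece_iff hbp i x).2 hi⟩)

lemma coord_constraint_iff {H : Set (Fin n → ℝm)} (h2 : TropConvex Hᶜ) (t : Fin n)
    (x : Fin n → ℝm) :
    gle (TGerm.add (toGerm ((⊥ : ℝm)))
        (TGerm.gsum fun i =>
          (toGerm (if i = t then ((0:ℝ) : ℝm) else ⊥)).mul (toGerm (x i))))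
      (TGerm.add (gamC0 H t) (TGerm.gsum fun i => (gamC H t i).mul (toGerm (x i)))) ↔
    ¬ ∃ p ∈ CP H t, x ∈ Corner t p.1 p.2 := by
  rw [lhs_coord t x]
  by_cases hcp : CP H t = ∅
  · have hg : gamC0 H t = posInf := by rw [gamC0, if_pos hcp]
    rw [hg]
    constructor
    · intro _
      rintro ⟨p, hp, -⟩
      rw [hcp] at hp
      exact hp
    · intro _
      exact gle_add_iff.2 (Or.inl gle_toGerm_posInf)
  · have hne' : (CP H t).Nonempty := Set.nonempty_iff_ne_empty.2 hcp
    cases hxt : x t using WithBot.recBotCoe with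
    | bot =>
        constructor
        · intro _
          rintro ⟨p, hp, hx0, -⟩
          rw [hxt, rV_bot, le_bot_iff] at hx0
          exact EReal.coe_ne_bot p.1 hx0
        · intro _
          exact gle_add_iff.2 (Or.inr (gle_gsum_iff _ |>.2 (Or.inl rfl)))
    | coe r =>
        rw [mem_unionCorner_iff h2 hne' x r hxt, gle_add_iff, gle_gsum_iff,
          coord_piece0_iff hcp r]
        have hzb : ((r:ℝ) : ℝm) ≠ ⊥ := WithBot.coe_ne_bot
        constructor
        · rintro (h | h | ⟨i, hi⟩)
          · rintro ⟨h0, -⟩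
            exact h h0
          · exact absurd h hzb
          · rintro ⟨-, hall⟩
            exact (coord_piecej_iff hcp r i x).1 hi (hall i)
        · intro h
          rw [not_and_or] at h
          rcases h with h | h
          · exact Or.inl h
          · rw [not_forall] at h
            obtain ⟨i, hi⟩ := h
            exact Or.inr (Or.inr ⟨i, (coord_piecej_iff hcp r i x).2 hi⟩)

lemma main {H : Set (Fin n → ℝm)} (h1 : TropConvex H) (h2 : TropConvex Hᶜ) :
    IsMixedPoly H := by
  refine ⟨n + 1,
    Fin.cases (((0:ℝ) : ℝm)) (fun _ => ⊥),
    Fin.cases (fun _ => (⊥ : ℝm)) (fun t => fun i => if i = t then ((0:ℝ) : ℝm) else ⊥),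
    Fin.cases (gamB0 H) (fun t => gamC0 H t),
    Fin.cases (gamB H) (fun t => gamC H t), ?_⟩
  ext x
  simp only [Set.mem_setOf_eq]
  constructor
  · intro hx k
    induction k using Fin.cases with
    | zero =>
        simp only [Fin.cases_zero]
        refine (box_constraint_iff h2 x).2 ?_
        rintro ⟨c, hc, hxc⟩
        exact hc hxc hx
    | succ t =>
        simp only [Fin.cases_succ]
        refine (coord_constraint_iff h2 t x).2 ?_
        rintro ⟨p, hp, hxp⟩
        exact hp.2 hxp hx
  · intro hx
    by_contra hxH
    rcases coverage h1 hxH with ⟨c, hc, hxc⟩ | ⟨t, p, hp, hxp⟩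
    · have hk := hx 0
      simp only [Fin.cases_zero] at hk
      exact (box_constraint_iff h2 x).1 hk ⟨c, hc, hxc⟩
    · have hk := hx t.succ
      simp only [Fin.cases_succ] at hk
      exact (coord_constraint_iff h2 t x).1 hk ⟨p, hp, hxp⟩

end HemiAux

theorem statement_13 (n : ℕ) (H : Set (Fin n → WithBot ℝ))
    (h1 : TropConvex H) (h2 : TropConvex Hᶜ) :
    IsMixedPoly H :=
  HemiAux.main h1 h2
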